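/- Fix an integer k ≥ 0 and let K = 2^k. Let X_a : ℕ → ℝ, for a ∈ {0,…,K−1}, be online bidding strategies (each with X_a(0) = 1, strictly increasing, and tending to +∞), each of which is 4-competitive, i.e. cost(X_a, u) ≤ 4u for every u ≥ 1. Let adv : {u : ℝ | u ≥ 1} → {0,…,K−1} be any advice function and let r ≥ 1 be such that cost(X_{adv(u)}, u) ≤ r·u for every u ≥ 1. Then r ≥ 2 + 1/(3·2^k). That is, any bidding strategy with k advice bits that is (r,4)-competitive satisfies r ≥ 2 + 1/(3·2^k). -/

import Mathlib

open scoped Classical in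
/-- The cost of a bidding strategy `x` on a hidden value `u`: the sum
`∑_{j=1}^{i} x j` where `i` is the least index with `x i ≥ u` (and `0` if no
such index exists, which never happens for strategies tending to infinity). -/
noncomputable def bidCost (x : ℕ → ℝ) (u : ℝ) : ℝ :=
  if h : ∃ i : ℕ, u ≤ x i then ∑ j ∈ Finset.Icc 1 (Nat.find h), x j else 0

namespace BidAux

/-- Partial sum of bids from index 1 to n. -/
def BS (x : ℕ → ℝ) (n : ℕ) : ℝ := ∑ j ∈ Finset.Icc 1 n, x j

lemma BS_succ (x : ℕ → ℝ) (n : ℕ) : BS x (n+1) = BS x n + x (n+1) :=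
  Finset.sum_Icc_succ_top (Nat.succ_le_succ (Nat.zero_le n)) x

variable {x : ℕ → ℝ}

lemma one_le_x (hx0 : x 0 = 1) (hmono : StrictMono x) (j : ℕ) : 1 ≤ x j :=
  hx0 ▸ hmono.monotone (Nat.zero_le j)

lemma BS_strictMono (hx0 : x 0 = 1) (hmono : StrictMono x) : StrictMono (BS x) := by
  apply strictMono_nat_of_lt_succ
  intro n
  have h := one_le_x hx0 hmono (n+1)
  rw [BS_succ]; linarith

lemma bidCost_eq (u : ℝ) (hex : ∃ i, u ≤ x i) :
    bidCost x u = BS x (Nat.find hex) := by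
  unfold bidCost
  rw [dif_pos hex]; rfl

lemma BS4 (hx0 : x 0 = 1) (hmono : StrictMono x)
    (hcomp : ∀ u : ℝ, 1 ≤ u → bidCost x u ≤ 4 * u) (i : ℕ) :
    BS x (i+1) ≤ 4 * x i := by
  by_contra hlt
  push_neg at hlt
  have hgap : 0 < x (i+1) - x i := by have := hmono (Nat.lt_succ_self i); linarith
  set ε := min (x (i+1) - x i) ((BS x (i+1) - 4 * x i)/8) with hε
  have hε0 : 0 < ε := lt_min hgap (by linarith)
  have hεle1 := min_le_left (x (i+1) - x i) ((BS x (i+1) - 4 * x i)/8)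
  have hεle2 := min_le_right (x (i+1) - x i) ((BS x (i+1) - 4 * x i)/8)
  set u := x i + ε with hu
  have hex : ∃ j, u ≤ x j := ⟨i+1, by rw [hu]; linarith⟩
  have hfind : Nat.find hex = i + 1 := by
    rw [Nat.find_eq_iff]
    refine ⟨by rw [hu]; linarith, ?_⟩
    intro m hm
    have hmx : x m ≤ x i := hmono.monotone (Nat.lt_succ_iff.mp hm)
    simp only [not_le]
    rw [hu]; linarith
  have h1u : 1 ≤ u := by have := one_le_x hx0 hmono i; rw [hu]; linarith
  have hc := hcomp u h1u
  rw [bidCost_eq u hex, hfind] at hc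
  rw [hu] at hc
  linarith

lemma SL (hx0 : x 0 = 1) (hmono : StrictMono x)
    (hcomp : ∀ u : ℝ, 1 ≤ u → bidCost x u ≤ 4 * u) :
    ∀ n : ℕ, 1 ≤ n → (2 - 2/((n:ℝ)+1)) * x n ≤ BS x n := by
  intro n hn
  induction n, hn using Nat.le_induction with
  | base =>
    have : BS x 1 = x 1 := by simp [BS]
    rw [this]; norm_num
  | succ n hn IH =>
    have hx4 := BS4 hx0 hmono hcomp n
    have hBSs := BS_succ x n
    have hxp : (0:ℝ) < x n := lt_of_lt_of_le one_pos (one_le_x hx0 hmono n)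
    have hν1 : (1:ℝ) ≤ (n:ℝ) := by exact_mod_cast hn
    have hxs : x (n+1) ≤ (2 + 2/((n:ℝ)+1)) * x n := by
      have h2 : (2 - 2/((n:ℝ)+1)) * x n ≤ BS x n := IH
      linarith
    have hcoef : (0:ℝ) ≤ 1 - 2/((n:ℝ)+2) := by
      have h1 : 2/((n:ℝ)+2) ≤ 1 := by
        rw [div_le_one (by positivity)]; linarith
      linarith
    have hkey : (1 - 2/((n:ℝ)+2)) * ((2 + 2/((n:ℝ)+1)) * x n)
        = (2 - 2/((n:ℝ)+1)) * x n := by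
      field_simp
      ring
    have h2 : (1 - 2/((n:ℝ)+2)) * x (n+1) ≤ (2 - 2/((n:ℝ)+1)) * x n :=
      hkey ▸ mul_le_mul_of_nonneg_left hxs hcoef
    have hgoal : (2 - 2/((n:ℝ)+2)) * x (n+1) ≤ BS x n + x (n+1) := by
      have := IH
      nlinarith
    rw [hBSs]
    have hcast : ((n+1 : ℕ):ℝ) + 1 = (n:ℝ) + 2 := by push_cast; ring
    rw [hcast]
    exact hgoal

lemma xgrow (hx0 : x 0 = 1) (hmono : StrictMono x)
    (hcomp : ∀ u : ℝ, 1 ≤ u → bidCost x u ≤ 4 * u) :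
    ∀ n : ℕ, x n ≤ 3 ^ (n+1) := by
  intro n
  induction n with
  | zero => rw [hx0]; norm_num
  | succ n IH =>
    rcases Nat.eq_zero_or_pos n with h0 | h1
    · subst h0
      have h4 := BS4 hx0 hmono hcomp 0
      have hBS1 : BS x 1 = x 1 := by simp [BS]
      rw [hBS1, hx0] at h4
      norm_num
      linarith
    · have hSLn := SL hx0 hmono hcomp n h1
      have hx4 := BS4 hx0 hmono hcomp n
      have hBSs := BS_succ x n
      have hxp : (0:ℝ) < x n := lt_of_lt_of_le one_pos (one_le_x hx0 hmono n)
      have hν1 : (1:ℝ) ≤ (n:ℝ) := by exact_mod_cast h1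
      have hfrac : 2/((n:ℝ)+1) ≤ 1 := by
        rw [div_le_one (by positivity)]; linarith
      have hstep : x (n+1) ≤ 3 * x n := by nlinarith
      have h3p : (0:ℝ) < 3 ^ (n+1) := by positivity
      calc x (n+1) ≤ 3 * x n := hstep
        _ ≤ 3 * 3 ^ (n+1) := by linarith
        _ = 3 ^ (n+1+1) := by ring

lemma chain_pow {f : ℕ → ℝ} {F : Finset ℕ} {c : ℝ} (hc : 0 ≤ c) (hne : F.Nonempty)
    (hstep : ∀ t ∈ F, ∀ t' ∈ F, t < t' → f t' ≤ c * f t) :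
    ∃ t₀ ∈ F, ∃ t₁ ∈ F, f t₁ ≤ c ^ (F.card - 1) * f t₀ := by
  have hm : 0 < F.card := Finset.card_pos.mpr hne
  set e := F.orderEmbOfFin rfl with he
  have hmem : ∀ j : Fin F.card, e j ∈ F := fun j => F.orderEmbOfFin_mem rfl j
  have hclaim : ∀ jv, ∀ hj : jv < F.card,
      f (e ⟨jv, hj⟩) ≤ c ^ jv * f (e ⟨0, hm⟩) := by
    intro jv
    induction jv with
    | zero => intro hj; simp
    | succ j IHj =>
      intro hj
      have hjlt : j < F.card := Nat.lt_of_succ_lt hj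
      have h1 : (e ⟨j, hjlt⟩) < e ⟨j+1, hj⟩ := by
        apply e.lt_iff_lt.mpr
        exact Fin.mk_lt_mk.mpr (Nat.lt_succ_self j)
      have h2 := hstep _ (hmem ⟨j, hjlt⟩) _ (hmem ⟨j+1, hj⟩) h1
      have h3 := IHj hjlt
      calc f (e ⟨j+1, hj⟩) ≤ c * f (e ⟨j, hjlt⟩) := h2
        _ ≤ c * (c ^ j * f (e ⟨0, hm⟩)) := mul_le_mul_of_nonneg_left h3 hc
        _ = c ^ (j+1) * f (e ⟨0, hm⟩) := by ring
  have hlast : F.card - 1 < F.card := Nat.sub_lt hm one_pos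
  exact ⟨e ⟨0, hm⟩, hmem _, e ⟨F.card - 1, hlast⟩, hmem _, hclaim _ hlast⟩

end BidAux

set_option maxHeartbeats 2000000 in
/-- any bidding strategy with `k` advice bits whose every branch is
`4`-competitive has trusted competitive ratio `r ≥ 2 + 1/(3·2^k)`. -/
theorem bidding_lower_bound_k_bits (k : ℕ) (X : Fin (2 ^ k) → ℕ → ℝ)
    (hX : ∀ a : Fin (2 ^ k),
      X a 0 = 1 ∧ StrictMono (X a) ∧ Filter.Tendsto (X a) Filter.atTop Filter.atTop)
    (hcomp : ∀ (a : Fin (2 ^ k)) (u : ℝ), 1 ≤ u → bidCost (X a) u ≤ 4 * u)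
    (adv : ℝ → Fin (2 ^ k)) (r : ℝ) (hr : 1 ≤ r)
    (hadv : ∀ u : ℝ, 1 ≤ u → bidCost (X (adv u)) u ≤ r * u) :
    r ≥ 2 + 1 / (3 * 2 ^ k) := by
  by_contra hcon
  push_neg at hcon
  have hKpos : (0:ℝ) < 2 ^ k := by positivity
  have hK1 : (1:ℝ) ≤ 2 ^ k := one_le_pow₀ (by norm_num)
  set y : ℝ := ((2:ℝ) ^ k)⁻¹ with hy
  have hy0 : 0 < y := by positivity
  have hy1 : y ≤ 1 := by
    rw [hy]
    exact inv_le_one_of_one_le₀ hK1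
  have hrb : r < 2 + y / 3 := by
    have h1 : 1 / (3 * (2:ℝ)^k) = y / 3 := by rw [hy]; field_simp
    rw [← h1]; exact hcon
  have hr73 : r < 7/3 := by linarith
  have hr0 : (0:ℝ) < r := lt_of_lt_of_le one_pos hr
  -- per-strategy facts
  have hx0 : ∀ a, X a 0 = 1 := fun a => (hX a).1
  have hmono : ∀ a, StrictMono (X a) := fun a => (hX a).2.1
  have hexists : ∀ (a : Fin (2^k)) (v : ℝ), ∃ i, v ≤ X a i :=
    fun a v => ((hX a).2.2.eventually_ge_atTop v).exists
  -- constants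
  set N0 : ℕ := 300 * 2 ^ k with hN0
  set T : ℕ := 10 * 2 ^ k with hT
  set γ : ℝ := y / 100 with hγ
  set D' : ℝ := 1 + y / 5 with hD'
  set c₂ : ℝ := 2 - y / 150 with hc₂
  have hγ0 : 0 < γ := by rw [hγ]; positivity
  have hc₂1 : (1:ℝ) ≤ c₂ := by rw [hc₂]; linarith
  have hc₂0 : (0:ℝ) < c₂ := by linarith
  have hD'1 : (1:ℝ) ≤ D' := by rw [hD']; linarith
  have hD'2 : D' ≤ 2 := by rw [hD']; linarith
  have hrγ : 0 < r * (1 + γ) := by positivity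
  have hkey : r * (1 + γ) ≤ c₂ * D' := by
    rw [hγ, hc₂, hD']
    nlinarith [mul_le_mul_of_nonneg_right (le_of_lt hrb)
      (show (0:ℝ) ≤ 1 + y/100 by linarith), sq_nonneg y, hy0, hy1]
  set V : ℝ := 3 ^ (N0 + 1) with hV
  have hV1 : (1:ℝ) ≤ V := by rw [hV]; exact one_le_pow₀ (by norm_num)
  set u0 : ℝ := V * 2 ^ T with hu0def
  have hu0pos : 0 < u0 := by rw [hu0def]; positivity
  have hDexp : D' ^ T ≤ Real.exp 2 := by
    have h1 : D' ≤ Real.exp (y/5) := by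
      have h2 := Real.add_one_le_exp (y/5)
      rw [hD']; linarith
    have h2 : D' ^ T ≤ Real.exp (y/5) ^ T :=
      pow_le_pow_left₀ (by rw [hD']; linarith) h1 T
    have h3 : Real.exp (y/5) ^ T = Real.exp ((T:ℝ) * (y/5)) := (Real.exp_nat_mul _ T).symm
    have h4 : (T:ℝ) * (y/5) = 2 := by
      rw [hT, hy]; push_cast
      have : ((2:ℝ)^k) ≠ 0 := ne_of_gt hKpos
      field_simp
      ring
    rw [h3, h4] at h2
    exact h2
  have hexp2 : Real.exp 2 < 7.4 := by
    have h := Real.exp_one_lt_d9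
    have h2 : Real.exp 2 = Real.exp 1 * Real.exp 1 := by
      rw [← Real.exp_add]; norm_num
    rw [h2]
    nlinarith [Real.exp_pos 1]
  set stepf : ℝ → ℝ := fun v => bidCost (X (adv v)) v / (r * (1 + γ)) with hstepf
  set u : ℕ → ℝ := fun t => stepf^[t] u0 with hud
  have hu0 : u 0 = u0 := rfl
  have husucc : ∀ t, u (t+1) = bidCost (X (adv (u t))) (u t) / (r * (1 + γ)) := by
    intro t
    show stepf^[t+1] u0 = _
    rw [Function.iterate_succ_apply']
  -- serving index
  set nn : ℝ → ℕ := fun v => Nat.find (hexists (adv v) v) with hnn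
  have hcost_eq : ∀ v, bidCost (X (adv v)) v = BidAux.BS (X (adv v)) (nn v) :=
    fun v => BidAux.bidCost_eq v (hexists (adv v) v)
  have hserv : ∀ v, v ≤ X (adv v) (nn v) := fun v => Nat.find_spec (hexists (adv v) v)
  have hnN : ∀ v, V ≤ v → N0 ≤ nn v := by
    intro v hv
    by_contra hlt
    push_neg at hlt
    have h1 : X (adv v) (nn v) ≤ 3 ^ (nn v + 1) :=
      BidAux.xgrow (hx0 _) (hmono _) (hcomp _) (nn v)
    have h2 : (3:ℝ) ^ (nn v + 1) < 3 ^ (N0 + 1) := by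
      apply pow_lt_pow_right₀ (by norm_num) (by omega)
    have h3 := hserv v
    rw [hV] at hv
    linarith
  have hN0one : 1 ≤ N0 := by
    rw [hN0]
    have : 0 < 2 ^ k := by positivity
    omega
  have hflow : ∀ v, V ≤ v → c₂ * v ≤ bidCost (X (adv v)) v := by
    intro v hv
    have hn0 := hnN v hv
    have hn1 : 1 ≤ nn v := le_trans hN0one hn0
    have hSL := BidAux.SL (hx0 (adv v)) (hmono (adv v)) (hcomp (adv v)) (nn v) hn1
    have hcast : (300:ℝ) * 2^k ≤ (nn v : ℝ) + 1 := by
      have h1 : (N0:ℝ) ≤ (nn v : ℝ) := by exact_mod_cast hn0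
      rw [hN0] at h1; push_cast at h1 ⊢; linarith
    have hfr : 2 / ((nn v:ℝ) + 1) ≤ y / 150 := by
      have h1 : 2 / ((nn v:ℝ) + 1) ≤ 2 / (300 * 2^k) := by
        apply div_le_div_of_nonneg_left (by norm_num) (by positivity) hcast
      have h2 : 2 / (300 * (2:ℝ)^k) = y / 150 := by
        rw [hy]; field_simp; ring
      linarith
    have hcc : c₂ ≤ 2 - 2 / ((nn v : ℝ) + 1) := by rw [hc₂]; linarith
    have hvX : v ≤ X (adv v) (nn v) := hserv v
    have hv0 : (0:ℝ) < v := lt_of_lt_of_le one_pos (le_trans hV1 hv)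
    have hX0 : (0:ℝ) ≤ X (adv v) (nn v) := le_trans (le_of_lt hv0) hvX
    rw [hcost_eq v]
    calc c₂ * v ≤ c₂ * X (adv v) (nn v) := mul_le_mul_of_nonneg_left hvX (le_of_lt hc₂0)
      _ ≤ (2 - 2/((nn v:ℝ)+1)) * X (adv v) (nn v) := mul_le_mul_of_nonneg_right hcc hX0
      _ ≤ BidAux.BS (X (adv v)) (nn v) := hSL
  -- invariant
  have hInv : ∀ t, t ≤ T → (V ≤ u t ∧ u 0 ≤ D' ^ t * u t ∧ ∀ s, s ≤ t → u t ≤ u s) := by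
    intro t
    induction t with
    | zero =>
      intro _
      refine ⟨?_, by simp, ?_⟩
      · rw [hu0, hu0def]
        have h2T : (1:ℝ) ≤ 2 ^ T := one_le_pow₀ (by norm_num)
        nlinarith
      · intro s hs
        have : s = 0 := Nat.le_zero.mp hs
        rw [this]
    | succ t IH =>
      intro hts
      obtain ⟨hVt, hDt, hmon⟩ := IH (le_of_lt (Nat.lt_of_succ_le hts))
      have h1t : 1 ≤ u t := le_trans hV1 hVt
      have hut0 : (0:ℝ) < u t := lt_of_lt_of_le one_pos h1t
      have hfl := hflow (u t) hVt
      have hfh := hadv (u t) h1t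
      have hfpos : 0 < bidCost (X (adv (u t))) (u t) :=
        lt_of_lt_of_le (mul_pos hc₂0 hut0) hfl
      have hus := husucc t
      have hu1pos : 0 < u (t+1) := by rw [hus]; positivity
      have hle : u (t+1) ≤ u t := by
        rw [hus, div_le_iff₀ hrγ]
        have hrr : r ≤ r * (1+γ) := le_mul_of_one_le_right (le_of_lt hr0) (by linarith)
        calc bidCost (X (adv (u t))) (u t) ≤ r * u t := hfh
          _ ≤ (r * (1+γ)) * u t := mul_le_mul_of_nonneg_right hrr (le_of_lt hut0)
          _ = u t * (r * (1+γ)) := by ring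
      have hDstep : u t ≤ D' * u (t+1) := by
        have h2 : bidCost (X (adv (u t))) (u t) = u (t+1) * (r * (1+γ)) := by
          rw [hus]; field_simp
        have h3 : c₂ * u t ≤ u (t+1) * (r * (1+γ)) := by rw [← h2]; exact hfl
        have h4 : u (t+1) * (r * (1+γ)) ≤ u (t+1) * (c₂ * D') :=
          mul_le_mul_of_nonneg_left hkey (le_of_lt hu1pos)
        have h5 : c₂ * u t ≤ c₂ * (D' * u (t+1)) := by
          have h6 := le_trans h3 h4
          linarith [h6]
        exact le_of_mul_le_mul_left h5 hc₂0
      have hD2 : u 0 ≤ D' ^ (t+1) * u (t+1) := by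
        calc u 0 ≤ D' ^ t * u t := hDt
          _ ≤ D' ^ t * (D' * u (t+1)) := by
              apply mul_le_mul_of_nonneg_left hDstep (by positivity)
          _ = D' ^ (t+1) * u (t+1) := by ring
      refine ⟨?_, hD2, ?_⟩
      · have hp1 : D' ^ (t+1) ≤ 2 ^ (t+1) := pow_le_pow_left₀ (by positivity) hD'2 (t+1)
        have hp2 : (2:ℝ) ^ (t+1) ≤ 2 ^ T := pow_le_pow_right₀ (by norm_num) hts
        have h6 : V * 2 ^ T ≤ 2 ^ T * u (t+1) := by
          calc V * 2 ^ T = u 0 := by rw [hu0, hu0def]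
            _ ≤ D' ^ (t+1) * u (t+1) := hD2
            _ ≤ 2 ^ T * u (t+1) := by
                apply mul_le_mul_of_nonneg_right (le_trans hp1 hp2) (le_of_lt hu1pos)
        have h2Tpos : (0:ℝ) < 2 ^ T := by positivity
        have h7 : 2 ^ T * V ≤ 2 ^ T * u (t+1) := by linarith [h6]
        exact le_of_mul_le_mul_left h7 h2Tpos
      · intro s hs
        rcases Nat.lt_or_ge s (t+1) with h | h
        · exact le_trans hle (hmon s (Nat.lt_succ_iff.mp h))
        · have : s = t + 1 := le_antisymm hs h
          rw [this]
  -- pigeonhole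
  set fS : ℕ → ℝ := fun t => bidCost (X (adv (u t))) (u t) with hfS
  have hmaps : ∀ t ∈ Finset.range T, adv (u t) ∈ (Finset.univ : Finset (Fin (2^k))) :=
    fun t _ => Finset.mem_univ _
  have hKn : 0 < 2 ^ k := by positivity
  have hcards : (Finset.univ : Finset (Fin (2^k))).card * 9 < (Finset.range T).card := by
    rw [Finset.card_univ, Fintype.card_fin, Finset.card_range, hT]
    omega
  obtain ⟨a, -, hFa⟩ :=
    Finset.exists_lt_card_fiber_of_mul_lt_card_of_maps_to hmaps hcards
  set F : Finset ℕ := (Finset.range T).filter (fun t => adv (u t) = a) with hF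
  -- chain step
  have hchain : ∀ t ∈ F, ∀ t' ∈ F, t < t' → fS t' ≤ (4/7) * fS t := by
    intro t ht t' ht' htt
    rw [hF, Finset.mem_filter, Finset.mem_range] at ht ht'
    obtain ⟨htT, hta⟩ := ht
    obtain ⟨ht'T, ht'a⟩ := ht'
    have hIt := hInv t (le_of_lt htT)
    have hIt' := hInv t' (le_of_lt ht'T)
    have hVt : V ≤ u t := hIt.1
    have hVt' : V ≤ u t' := hIt'.1
    have h1t : 1 ≤ u t := le_trans hV1 hVt
    have h1t' : 1 ≤ u t' := le_trans hV1 hVt'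
    have hut0 : (0:ℝ) < u t := lt_of_lt_of_le one_pos h1t
    have hfpos : 0 < fS t := lt_of_lt_of_le (mul_pos hc₂0 hut0) (hflow (u t) hVt)
    have h1 : fS t' ≤ r * u t' := hadv (u t') h1t'
    have h2 : u t' ≤ u (t+1) := hIt'.2.2 (t+1) (Nat.succ_le_of_lt htt)
    have h3 : u (t+1) = fS t / (r * (1+γ)) := husucc t
    have h4 : fS t' < fS t := by
      have h5 : r * (fS t / (r * (1+γ))) = fS t / (1+γ) := by
        field_simp
      have h6 : fS t / (1+γ) < fS t := div_lt_self hfpos (by linarith)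
      have h7 : r * u t' ≤ r * u (t+1) := mul_le_mul_of_nonneg_left h2 (le_of_lt hr0)
      rw [h3, h5] at h7
      linarith
    -- translate to partial sums
    have hft : fS t = BidAux.BS (X a) (nn (u t)) := by
      rw [hfS]
      show bidCost (X (adv (u t))) (u t) = _
      rw [hcost_eq (u t), hta]
    have hft' : fS t' = BidAux.BS (X a) (nn (u t')) := by
      rw [hfS]
      show bidCost (X (adv (u t'))) (u t') = _
      rw [hcost_eq (u t'), ht'a]
    have hBSsm := BidAux.BS_strictMono (hx0 a) (hmono a)
    have h6 : nn (u t') < nn (u t) := by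
      have := h4
      rw [hft, hft'] at this
      exact hBSsm.lt_iff_lt.mp this
    have hn1 : 1 ≤ nn (u t) := le_trans hN0one (hnN (u t) hVt)
    have h7 : BidAux.BS (X a) (nn (u t')) ≤ BidAux.BS (X a) (nn (u t) - 1) :=
      hBSsm.monotone (by omega)
    have h8 : BidAux.BS (X a) (nn (u t)) =
        BidAux.BS (X a) (nn (u t) - 1) + X a (nn (u t)) := by
      have heq : nn (u t) - 1 + 1 = nn (u t) := by omega
      calc BidAux.BS (X a) (nn (u t)) = BidAux.BS (X a) (nn (u t) - 1 + 1) := by rw [heq]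
        _ = _ := by rw [BidAux.BS_succ, heq]
    have h9 : u t ≤ X a (nn (u t)) := by
      have := hserv (u t); rw [hta] at this; exact this
    have h10 : fS t ≤ r * u t := hadv (u t) h1t
    have h11 : fS t / r ≤ u t := by
      rw [div_le_iff₀ hr0]
      linarith
    have h12 : (3/7) * fS t ≤ fS t / r := by
      rw [le_div_iff₀ hr0]
      have hnn0 : (0:ℝ) ≤ 3/7 * fS t := mul_nonneg (by norm_num) (le_of_lt hfpos)
      have := mul_le_mul_of_nonneg_left (le_of_lt hr73) hnn0
      linarith
    have h13 : fS t' ≤ fS t - X a (nn (u t)) := by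
      calc fS t' = BidAux.BS (X a) (nn (u t')) := hft'
        _ ≤ BidAux.BS (X a) (nn (u t) - 1) := h7
        _ = BidAux.BS (X a) (nn (u t)) - X a (nn (u t)) := by linarith [h8]
        _ = fS t - X a (nn (u t)) := by rw [hft]
    linarith
  -- endgame
  have hFne : F.Nonempty := Finset.card_pos.mp (by omega)
  obtain ⟨t₀, ht₀, t₁, ht₁, hcr⟩ := BidAux.chain_pow (by norm_num : (0:ℝ) ≤ 4/7) hFne hchain
  have ht₀T : t₀ < T := Finset.mem_range.mp (Finset.mem_filter.mp ht₀).1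
  have ht₁T : t₁ < T := Finset.mem_range.mp (Finset.mem_filter.mp ht₁).1
  have hIt₀ := hInv t₀ (le_of_lt ht₀T)
  have hIt₁ := hInv t₁ (le_of_lt ht₁T)
  have hu0eq : u 0 = u0 := hu0
  -- lower bound on fS t₁
  have hVt₁ : V ≤ u t₁ := hIt₁.1
  have hut₁pos : (0:ℝ) < u t₁ := lt_of_lt_of_le one_pos (le_trans hV1 hVt₁)
  have hlow : u t₁ ≤ fS t₁ := by
    have h1 := hflow (u t₁) hVt₁
    have h2 : 1 * u t₁ ≤ c₂ * u t₁ := mul_le_mul_of_nonneg_right hc₂1 (le_of_lt hut₁pos)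
    calc u t₁ = 1 * u t₁ := by ring
      _ ≤ c₂ * u t₁ := h2
      _ ≤ fS t₁ := h1
  -- upper bound on fS t₀
  have hup : fS t₀ ≤ r * u0 := by
    have h1 : fS t₀ ≤ r * u t₀ := hadv (u t₀) (le_trans hV1 hIt₀.1)
    have h2 : u t₀ ≤ u 0 := hIt₀.2.2 0 (Nat.zero_le _)
    rw [hu0eq] at h2
    have h3 : r * u t₀ ≤ r * u0 := mul_le_mul_of_nonneg_left h2 (le_of_lt hr0)
    linarith
  have hfS0 : (0:ℝ) ≤ fS t₀ := by
    have h1 := hflow (u t₀) hIt₀.1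
    have := mul_pos hc₂0 (lt_of_lt_of_le one_pos (le_trans hV1 hIt₀.1))
    linarith
  have hu0ub : u0 ≤ Real.exp 2 * u t₁ := by
    have h1 : u 0 ≤ D' ^ t₁ * u t₁ := hIt₁.2.1
    have h2 : D' ^ t₁ ≤ D' ^ T := pow_le_pow_right₀ hD'1 (le_of_lt ht₁T)
    have h3 : D' ^ t₁ * u t₁ ≤ D' ^ T * u t₁ :=
      mul_le_mul_of_nonneg_right h2 (le_of_lt hut₁pos)
    have h4 : D' ^ T * u t₁ ≤ Real.exp 2 * u t₁ :=
      mul_le_mul_of_nonneg_right hDexp (le_of_lt hut₁pos)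
    rw [hu0eq] at h1
    linarith
  -- power comparison
  have h9le : 9 ≤ F.card - 1 := by omega
  have hpow : ((4:ℝ)/7) ^ (F.card - 1) ≤ (4/7) ^ 9 :=
    pow_le_pow_of_le_one (by norm_num) (by norm_num) h9le
  -- combine
  have hcomb : u0 ≤ Real.exp 2 * ((4/7:ℝ)^9 * (r * u0)) := by
    have h1 : fS t₁ ≤ (4/7:ℝ)^(F.card - 1) * fS t₀ := hcr
    have h2 : (4/7:ℝ)^(F.card - 1) * fS t₀ ≤ (4/7)^9 * fS t₀ :=
      mul_le_mul_of_nonneg_right hpow hfS0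
    have h3 : ((4:ℝ)/7)^9 * fS t₀ ≤ (4/7)^9 * (r * u0) :=
      mul_le_mul_of_nonneg_left hup (by positivity)
    have h4 : u t₁ ≤ (4/7:ℝ)^9 * (r * u0) := by linarith
    have h5 : Real.exp 2 * u t₁ ≤ Real.exp 2 * ((4/7:ℝ)^9 * (r * u0)) :=
      mul_le_mul_of_nonneg_left h4 (le_of_lt (Real.exp_pos 2))
    linarith
  have hfinal : Real.exp 2 * ((4/7:ℝ)^9 * (r * u0)) < u0 := by
    have h1 : r * u0 ≤ (7/3) * u0 := mul_le_mul_of_nonneg_right (le_of_lt hr73) (le_of_lt hu0pos)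
    have h2 : ((4:ℝ)/7)^9 * (r * u0) ≤ (4/7)^9 * ((7/3) * u0) :=
      mul_le_mul_of_nonneg_left h1 (by positivity)
    have h3 : Real.exp 2 * ((4/7:ℝ)^9 * (r * u0)) ≤ Real.exp 2 * ((4/7:ℝ)^9 * ((7/3) * u0)) :=
      mul_le_mul_of_nonneg_left h2 (le_of_lt (Real.exp_pos 2))
    have hB : (0:ℝ) ≤ (4/7:ℝ)^9 * ((7/3) * u0) := by positivity
    have h4 : Real.exp 2 * ((4/7:ℝ)^9 * ((7/3) * u0)) ≤ 7.4 * ((4/7:ℝ)^9 * ((7/3) * u0)) :=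
      mul_le_mul_of_nonneg_right (le_of_lt hexp2) hB
    have h5 : (7.4:ℝ) * ((4/7:ℝ)^9 * ((7/3) * u0)) < u0 := by
      have hc : (7.4:ℝ) * ((4/7:ℝ)^9 * (7/3)) < 1 := by norm_num
      nlinarith [hu0pos]
    linarith
  linarith
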